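/- Let N ≥ 3 and let q be an invertible element of a commutative ring. Let a and m be the N×N matrices with entries indexed mod N given by a_{ce} = 2δ̄_{c,e} − δ̄_{c−1,e} − δ̄_{c+1,e} (the affine A_{N−1} Cartan matrix) and m_{ce} = δ̄_{c−1,e} − δ̄_{c+1,e} (the skew-symmetric adjacency matrix). Then for all d, f ∈ {0,…,N−1}: Σ_{c,e=0}^{N−1} L_{cd}(q^{−1}) · a_{ce} q^{−m_{ce}} · L_{ef}(q) = (1 − q^N)(1 − q^{−N}) δ_{df}. -/
import Mathlib


open Finset

/-- The `N×N` matrix `L(q)` with entries `L_{cd}(q) = q^{-N⌊(d-c)/N⌋ + d - c}`,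
i.e. `q^{d-c}` if `d ≥ c` and `q^{N+d-c}` if `d < c`. -/
def Lmat {R : Type*} [CommRing R] (N : ℕ) (q : Rˣ) : Matrix (Fin N) (Fin N) R :=
  Matrix.of fun c d : Fin N =>
    ((q ^ (-(N : ℤ) * Int.fdiv ((d : ℤ) - (c : ℤ)) (N : ℤ) + (d : ℤ) - (c : ℤ)) : Rˣ) : R)

/-- The affine `A_{N-1}` Cartan matrix `a_{ce} = 2δ̄_{c,e} - δ̄_{c-1,e} - δ̄_{c+1,e}`
(indices mod `N`). -/
def cartanA (N : ℕ) (c e : Fin N) : ℤ :=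
  2 * (if c = e then 1 else 0) - (if ((e : ℕ) + 1) % N = (c : ℕ) then 1 else 0)
    - (if ((c : ℕ) + 1) % N = (e : ℕ) then 1 else 0)

/-- The skew-symmetric adjacency matrix `m_{ce} = δ̄_{c-1,e} - δ̄_{c+1,e}` (indices mod `N`). -/
def adjM (N : ℕ) (c e : Fin N) : ℤ :=
  (if ((e : ℕ) + 1) % N = (c : ℕ) then 1 else 0) - (if ((c : ℕ) + 1) % N = (e : ℕ) then 1 else 0)

/-- `zq q z = (q^z : R)`. -/
def zq {R : Type*} [CommRing R] (q : Rˣ) (z : ℤ) : R := ((q ^ z : Rˣ) : R)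

lemma zq_mul {R : Type*} [CommRing R] (q : Rˣ) (a b : ℤ) :
    zq q a * zq q b = zq q (a + b) := by
  simp [zq, zpow_add]

lemma zq_zero {R : Type*} [CommRing R] (q : Rˣ) : zq q 0 = 1 := by simp [zq]

lemma Lmat_eq {R : Type*} [CommRing R] (N : ℕ) (q : Rˣ) (c d : Fin N) :
    Lmat N q c d = zq q (((d : ℤ) - (c : ℤ)) % (N : ℤ)) := by
  unfold Lmat zq
  simp only [Matrix.of_apply]
  congr 2
  rw [Int.fdiv_eq_ediv_of_nonneg _ (by positivity), Int.emod_def]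
  ring

lemma Lmat_inv_eq {R : Type*} [CommRing R] (N : ℕ) (q : Rˣ) (c d : Fin N) :
    Lmat N q⁻¹ c d = zq q (-(((d : ℤ) - (c : ℤ)) % (N : ℤ))) := by
  rw [Lmat_eq]
  unfold zq
  rw [inv_zpow, ← zpow_neg]

section FinLemmas
variable {N : ℕ} [NeZero N]

lemma succ_iff' (hN : 3 ≤ N) (a b : Fin N) : ((a : ℕ) + 1) % N = (b : ℕ) ↔ b = a + 1 := by
  rw [Fin.ext_iff, Fin.val_add, Fin.val_one', Nat.mod_eq_of_lt (show 1 < N by omega), eq_comm]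

lemma fin_one_ne_zero (hN : 3 ≤ N) : (1 : Fin N) ≠ 0 := by
  intro h
  rw [Fin.ext_iff, Fin.val_one', Fin.val_zero, Nat.mod_eq_of_lt (show 1 < N by omega)] at h
  omega

lemma fin_two_ne_zero (hN : 3 ≤ N) : (1 + 1 : Fin N) ≠ 0 := by
  intro h
  rw [Fin.ext_iff, Fin.val_add, Fin.val_one', Fin.val_zero,
    Nat.mod_eq_of_lt (show 1 < N by omega), Nat.mod_eq_of_lt (show 1 + 1 < N by omega)] at h
  omega

/-- `Kf N c d = (d - c) mod N`. -/
def Kf (N : ℕ) (c d : Fin N) : ℤ := ((d : ℤ) - (c : ℤ)) % (N : ℤ)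

lemma Kf_nonneg (hN : 3 ≤ N) (c d : Fin N) : 0 ≤ Kf N c d :=
  Int.emod_nonneg _ (by positivity)

lemma Kf_lt (hN : 3 ≤ N) (c d : Fin N) : Kf N c d < (N : ℤ) :=
  Int.emod_lt_of_pos _ (by exact_mod_cast show 0 < N by omega)

lemma emod_add_left (n a b : ℤ) : (a % n + b) % n = (a + b) % n := by
  rw [Int.add_emod, Int.emod_emod_of_dvd _ dvd_rfl, ← Int.add_emod]

lemma emod_sub_right (n a b : ℤ) : (a - b % n) % n = (a - b) % n := by
  rw [Int.sub_emod, Int.emod_emod_of_dvd _ dvd_rfl, ← Int.sub_emod]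

lemma fin_coe_add_one (hN : 3 ≤ N) (c : Fin N) :
    ((c + 1 : Fin N) : ℤ) = ((c : ℤ) + 1) % (N : ℤ) := by
  have h1 : ((c + 1 : Fin N) : ℕ) = ((c : ℕ) + 1) % N := by
    rw [Fin.val_add, Fin.val_one', Nat.mod_eq_of_lt (show 1 < N by omega)]
  rw [show ((c + 1 : Fin N) : ℤ) = (((c + 1 : Fin N) : ℕ) : ℤ) from rfl, h1]
  push_cast [Int.natCast_mod]
  ring_nf

lemma Kf_succ (hN : 3 ≤ N) (c d : Fin N) : Kf N (c + 1) d = (Kf N c d - 1) % (N : ℤ) := by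
  unfold Kf
  rw [fin_coe_add_one hN c, emod_sub_right]
  conv_rhs => rw [sub_eq_add_neg, emod_add_left]
  congr 1
  ring

lemma Kf_pred (hN : 3 ≤ N) (c d : Fin N) : Kf N (c - 1) d = (Kf N c d + 1) % (N : ℤ) := by
  have h := Kf_succ hN (c - 1) d
  rw [sub_add_cancel] at h
  have h0 : 0 ≤ Kf N (c - 1) d := Kf_nonneg hN _ _
  have h1 : Kf N (c - 1) d < (N : ℤ) := Kf_lt hN _ _
  rw [h, emod_add_left, sub_add_cancel, Int.emod_eq_of_lt h0 h1]

lemma Kf_self (c : Fin N) : Kf N c c = 0 := by simp [Kf]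

lemma Kf_inj (hN : 3 ≤ N) {c c' d : Fin N} (h : Kf N c d = Kf N c' d) : c = c' := by
  unfold Kf at h
  have h3 : (((c' : ℤ) - (c : ℤ))) % (N : ℤ) = 0 := by
    have := Int.emod_eq_emod_iff_emod_sub_eq_zero.mp h
    rwa [show ((d : ℤ) - c) - ((d : ℤ) - c') = (c' : ℤ) - c by ring] at this
  have hdvd : (N : ℤ) ∣ ((c' : ℤ) - (c : ℤ)) := Int.dvd_of_emod_eq_zero h3
  have hc : ((c : ℕ) : ℤ) < N := by exact_mod_cast c.is_lt
  have hc' : ((c' : ℕ) : ℤ) < N := by exact_mod_cast c'.is_lt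
  have habs : |((c' : ℤ) - (c : ℤ))| < (N : ℤ) := by
    rw [abs_lt]
    constructor <;> [skip; skip] <;> push_cast <;> omega
  have hz : ((c' : ℤ) - (c : ℤ)) = 0 := Int.eq_zero_of_abs_lt_dvd hdvd habs
  have : ((c : ℕ) : ℤ) = ((c' : ℕ) : ℤ) := by omega
  exact Fin.ext (by exact_mod_cast this)

end FinLemmas

section Main
variable {R : Type*} [CommRing R]

lemma Lmat_Kf (N : ℕ) (q : Rˣ) (c d : Fin N) : Lmat N q c d = zq q (Kf N c d) :=
  Lmat_eq N q c d

lemma Lmat_inv_Kf (N : ℕ) (q : Rˣ) (c d : Fin N) :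
    Lmat N q⁻¹ c d = zq q (-(Kf N c d)) := Lmat_inv_eq N q c d

end Main

/-- Orthogonality identity showing the modified Cartan generators form independent
Heisenberg algebras:
`Σ_{c,e} L_{cd}(q⁻¹) a_{ce} q^{-m_{ce}} L_{ef}(q) = (1-q^N)(1-q^{-N}) δ_{df}`. -/
theorem Lmat_cartan_orthogonality {R : Type*} [CommRing R] (N : ℕ) (hN : 3 ≤ N) (q : Rˣ)
    (d f : Fin N) :
    (∑ c : Fin N, ∑ e : Fin N,
      Lmat N q⁻¹ c d * ((cartanA N c e : ℤ) : R) * ((q ^ (-(adjM N c e)) : Rˣ) : R) *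
        Lmat N q e f)
    = (1 - (q : R) ^ N) * (1 - ((q ^ (-(N : ℤ)) : Rˣ) : R)) *
        (if d = f then (1 : R) else 0) := by
  haveI : NeZero N := ⟨by omega⟩
  have hn3 : (3 : ℤ) ≤ (N : ℤ) := by exact_mod_cast hN
  have hx1 : ∀ c : Fin N, c - 1 ≠ c := fun c h => fin_one_ne_zero hN (sub_eq_self.mp h)
  have hx2 : ∀ c : Fin N, c + 1 ≠ c := fun c h =>
    fin_one_ne_zero hN (by rwa [add_eq_left] at h)
  have hx3 : ∀ c : Fin N, c - 1 ≠ c + 1 := by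
    intro c h
    rw [sub_eq_iff_eq_add, add_assoc] at h
    exact fin_two_ne_zero hN (left_eq_add.mp h)
  have m1 : (-1 : ℤ) % (N : ℤ) = (N : ℤ) - 1 := by
    rw [show (-1 : ℤ) = ((N : ℤ) - 1) + (N : ℤ) * (-1) by ring, Int.add_mul_emod_self_left,
      Int.emod_eq_of_lt (by omega) (by omega)]
  -- Step 1: rewrite each summand via indicator functions
  have hA : ∀ c e : Fin N,
      Lmat N q⁻¹ c d * ((cartanA N c e : ℤ) : R) * ((q ^ (-(adjM N c e)) : Rˣ) : R) *
        Lmat N q e f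
      = (if e = c then Lmat N q⁻¹ c d * (2 * Lmat N q c f) else 0)
        + (if e = c - 1 then Lmat N q⁻¹ c d * (-(zq q (-1)) * Lmat N q e f) else 0)
        + (if e = c + 1 then Lmat N q⁻¹ c d * (-(zq q 1) * Lmat N q e f) else 0) := by
    intro c e
    have hs1 : (((e : ℕ) + 1) % N = (c : ℕ)) ↔ e = c - 1 := by
      rw [succ_iff' hN, eq_sub_iff_add_eq, eq_comm]
    have hs2 : (((c : ℕ) + 1) % N = (e : ℕ)) ↔ e = c + 1 := succ_iff' hN c e
    simp only [cartanA, adjM, hs1, hs2]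
    rcases eq_or_ne e c with h1 | h1
    · subst h1
      simp only [if_pos rfl, if_neg (Ne.symm (hx1 e)), if_neg (Ne.symm (hx2 e))]
      norm_num [zq]
      ring
    · rcases eq_or_ne e (c - 1) with h2 | h2
      · subst h2
        simp only [if_pos rfl, if_neg (Ne.symm (hx1 c)), if_neg (hx1 c), if_neg (hx3 c)]
        norm_num [zq]
        ring
      · rcases eq_or_ne e (c + 1) with h3 | h3
        · subst h3
          simp only [if_pos rfl, if_neg (Ne.symm (hx2 c)), if_neg (hx2 c), if_neg (Ne.symm (hx3 c))]
          norm_num [zq]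
          ring
        · simp only [if_neg (Ne.symm h1), if_neg h1, if_neg h2, if_neg h3]
          push_cast
          ring
  simp only [hA, Finset.sum_add_distrib, Finset.sum_ite_eq', Finset.mem_univ, if_true]
  -- Step 2: reindex the shifted sums
  have h2 : (∑ c : Fin N, Lmat N q⁻¹ c d * (-(zq q (-1)) * Lmat N q (c - 1) f))
      = ∑ c : Fin N, Lmat N q⁻¹ (c + 1) d * (-(zq q (-1)) * Lmat N q c f) := by
    rw [← Equiv.sum_comp (Equiv.addRight (1 : Fin N))
      (fun c => Lmat N q⁻¹ c d * (-(zq q (-1)) * Lmat N q (c - 1) f))]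
    exact Finset.sum_congr rfl fun c _ => by
      simp [Equiv.coe_addRight, add_sub_cancel_right]
  have h3 : (∑ c : Fin N, Lmat N q⁻¹ c d * (-(zq q 1) * Lmat N q (c + 1) f))
      = ∑ c : Fin N, Lmat N q⁻¹ (c - 1) d * (-(zq q 1) * Lmat N q c f) := by
    rw [← Equiv.sum_comp (Equiv.subRight (1 : Fin N))
      (fun c => Lmat N q⁻¹ c d * (-(zq q 1) * Lmat N q (c + 1) f))]
    exact Finset.sum_congr rfl fun c _ => by
      simp [Equiv.subRight_apply, sub_add_cancel]
  rw [h2, h3, ← Finset.sum_add_distrib, ← Finset.sum_add_distrib]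
  -- Step 3: evaluate the bracket
  have hbr : ∀ c : Fin N,
      Lmat N q⁻¹ c d * (2 * Lmat N q c f)
        + Lmat N q⁻¹ (c + 1) d * (-(zq q (-1)) * Lmat N q c f)
        + Lmat N q⁻¹ (c - 1) d * (-(zq q 1) * Lmat N q c f)
      = (if c = d then (1 - zq q (-(N : ℤ))) * Lmat N q c f else 0)
        + (if c = d + 1 then (zq q (1 - (N : ℤ)) - zq q 1) * Lmat N q c f else 0) := by
    intro c
    have hk0 : 0 ≤ Kf N c d := Kf_nonneg hN c d
    have hkN : Kf N c d < (N : ℤ) := Kf_lt hN c d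
    have e1 : Lmat N q⁻¹ c d = zq q (-(Kf N c d)) := Lmat_inv_Kf N q c d
    have e2 : Lmat N q⁻¹ (c + 1) d = zq q (-((Kf N c d - 1) % (N : ℤ))) := by
      rw [Lmat_inv_Kf, Kf_succ hN]
    have e3 : Lmat N q⁻¹ (c - 1) d = zq q (-((Kf N c d + 1) % (N : ℤ))) := by
      rw [Lmat_inv_Kf, Kf_pred hN]
    rcases eq_or_ne c d with hcd | hcd
    · have hkz : Kf N c d = 0 := by rw [hcd, Kf_self]
      rw [if_pos hcd, if_neg (by rw [hcd]; exact Ne.symm (hx2 d)), e1, e2, e3, hkz]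
      rw [show ((0 : ℤ) - 1) = (-1 : ℤ) by ring, m1,
        show ((0 : ℤ) + 1) % (N : ℤ) = 1 from Int.emod_eq_of_lt (by omega) (by omega)]
      have z1 : zq q (-(0 : ℤ)) = 1 := by rw [neg_zero, zq_zero]
      have z2 : zq q (-((N : ℤ) - 1)) * zq q (-1) = zq q (-(N : ℤ)) := by
        rw [zq_mul]; congr 1; ring
      have z3 : zq q (-(1 : ℤ)) * zq q 1 = 1 := by
        rw [zq_mul, neg_add_cancel, zq_zero]
      rw [z1]
      linear_combination (-(Lmat N q c f)) * z2 - (Lmat N q c f) * z3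
    · have hkne : Kf N c d ≠ 0 := fun h =>
        hcd (Kf_inj hN (by rw [h, Kf_self]))
      rcases eq_or_ne c (d + 1) with hcd1 | hcd1
      · have hkv : Kf N c d = (N : ℤ) - 1 := by
          rw [hcd1, Kf_succ hN, Kf_self, show ((0 : ℤ) - 1) = (-1 : ℤ) by ring, m1]
        rw [if_neg hcd, if_pos hcd1, e1, e2, e3, hkv,
          show ((N : ℤ) - 1 - 1) % (N : ℤ) = (N : ℤ) - 2 from
            (by rw [show ((N:ℤ) - 1 - 1) = (N:ℤ) - 2 by ring];
                exact Int.emod_eq_of_lt (by omega) (by omega)),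
          show ((N : ℤ) - 1 + 1) % (N : ℤ) = 0 from
            (by rw [show ((N:ℤ) - 1 + 1) = (N:ℤ) by ring]; exact Int.emod_self)]
        have z1 : zq q (-(0 : ℤ)) = 1 := by rw [neg_zero, zq_zero]
        have z2 : zq q (-((N : ℤ) - 1)) = zq q (1 - (N : ℤ)) := by congr 1; ring
        have z3 : zq q (-((N : ℤ) - 2)) * zq q (-1) = zq q (1 - (N : ℤ)) := by
          rw [zq_mul]; congr 1; ring
        rw [z1, z2]
        linear_combination (-(Lmat N q c f)) * z3
      · have hkv1 : Kf N c d ≠ (N : ℤ) - 1 := fun h => by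
          apply hcd1
          apply Kf_inj hN (d := d)
          rw [h, Kf_succ hN, Kf_self, show ((0 : ℤ) - 1) = (-1 : ℤ) by ring, m1]
        rw [if_neg hcd, if_neg hcd1, e1, e2, e3,
          Int.emod_eq_of_lt (by omega) (by omega),
          Int.emod_eq_of_lt (by omega) (by omega)]
        have z2 : zq q (-(Kf N c d - 1)) * zq q (-1) = zq q (-(Kf N c d)) := by
          rw [zq_mul]; congr 1; ring
        have z3 : zq q (-(Kf N c d + 1)) * zq q 1 = zq q (-(Kf N c d)) := by
          rw [zq_mul]; congr 1; ring
        linear_combination (-(Lmat N q c f)) * z2 - (Lmat N q c f) * z3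
  rw [Finset.sum_congr rfl fun c _ => hbr c, Finset.sum_add_distrib]
  simp only [Finset.sum_ite_eq', Finset.mem_univ, if_true]
  -- Step 4: final evaluation
  rw [Lmat_Kf, Lmat_Kf, Kf_succ hN]
  have hq : ((q : R)) ^ N = zq q (N : ℤ) := by
    rw [zq, zpow_natCast]
    exact (Units.val_pow_eq_pow_val q N).symm
  have hq2 : ((q ^ (-(N : ℤ)) : Rˣ) : R) = zq q (-(N : ℤ)) := rfl
  rw [hq, hq2]
  have hkf0 : 0 ≤ Kf N d f := Kf_nonneg hN d f
  have hkfN : Kf N d f < (N : ℤ) := Kf_lt hN d f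
  rcases eq_or_ne d f with hdf | hdf
  · rw [if_pos hdf, show Kf N d f = 0 from (by rw [hdf, Kf_self]),
      show ((0 : ℤ) - 1) = (-1 : ℤ) by ring, m1, zq_zero]
    have r1 : zq q (1 - (N : ℤ)) * zq q ((N : ℤ) - 1) = 1 := by
      rw [zq_mul, show (1 - (N:ℤ)) + ((N:ℤ) - 1) = 0 by ring, zq_zero]
    have r2 : zq q 1 * zq q ((N : ℤ) - 1) = zq q (N : ℤ) := by
      rw [zq_mul]; congr 1; ring
    have r3 : zq q (N : ℤ) * zq q (-(N : ℤ)) = 1 := by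
      rw [zq_mul, add_neg_cancel, zq_zero]
    linear_combination r1 - r2 - r3
  · have hne : Kf N d f ≠ 0 := fun h => hdf (Kf_inj hN (by rw [h, Kf_self]))
    rw [if_neg hdf, Int.emod_eq_of_lt (by omega) (by omega)]
    have r1 : zq q (-(N : ℤ)) * zq q (Kf N d f) = zq q (Kf N d f - (N : ℤ)) := by
      rw [zq_mul]; congr 1; ring
    have r2 : zq q (1 - (N : ℤ)) * zq q (Kf N d f - 1) = zq q (Kf N d f - (N : ℤ)) := by
      rw [zq_mul]; congr 1; ring
    have r3 : zq q 1 * zq q (Kf N d f - 1) = zq q (Kf N d f) := by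
      rw [zq_mul]; congr 1; ring
    linear_combination (-1 : R) * r1 + r2 - r3
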